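/- For any odd prime power q, the maximum size of a triangular subfamily of the lines of the projective plane PG(2,q) is exactly q + 1; that is, there exist q + 1 lines such that no point lies on three of them, but no such collection of q + 2 lines exists. -/

import Mathlib

/-- Points of the standard model of `PG(2,q)` over a field `K`: affine points `(x,y)`,
points at infinity `(ω, m)` for slopes `m`, and the point `(ω, ω)`. The same type
indexes the lines. -/
abbrev PGPoint (K : Type*) := (K × K) ⊕ K ⊕ Unit

/-- The line of `PG(2,q)` with a given index, as a finite set of points. -/
def pgLine {K : Type*} [Field K] [Fintype K] [DecidableEq K] :
    PGPoint K → Finset (PGPoint K)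
  | Sum.inl (m, b) =>
      (Finset.univ.image fun x : K => (Sum.inl (x, m * x + b) : PGPoint K)) ∪
        {Sum.inr (Sum.inl m)}
  | Sum.inr (Sum.inl b) =>
      (Finset.univ.image fun y : K => (Sum.inl (b, y) : PGPoint K)) ∪
        {Sum.inr (Sum.inr ())}
  | Sum.inr (Sum.inr _) =>
      (Finset.univ.image fun y : K => (Sum.inr (Sum.inl y) : PGPoint K)) ∪
        {Sum.inr (Sum.inr ())}

section PGAux

variable {K : Type*} [Field K] [Fintype K] [DecidableEq K]

lemma mem_pgLine_inl {p : PGPoint K} {m b : K} :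
    p ∈ pgLine (Sum.inl (m, b)) ↔
      (∃ x : K, p = Sum.inl (x, m * x + b)) ∨ p = Sum.inr (Sum.inl m) := by
  simp [pgLine, eq_comm]
  exact or_comm

lemma mem_pgLine_vert {p : PGPoint K} {b : K} :
    p ∈ pgLine (Sum.inr (Sum.inl b)) ↔
      (∃ y : K, p = Sum.inl (b, y)) ∨ p = Sum.inr (Sum.inr ()) := by
  simp [pgLine, eq_comm]
  exact or_comm

lemma mem_pgLine_inf {p : PGPoint K} {u : Unit} :
    p ∈ pgLine (Sum.inr (Sum.inr u)) ↔
      (∃ y : K, p = Sum.inr (Sum.inl y)) ∨ p = Sum.inr (Sum.inr ()) := by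
  simp [pgLine, eq_comm]
  exact or_comm

def meetPt : PGPoint K → PGPoint K → PGPoint K
  | Sum.inl (m, b), Sum.inl (m', b') =>
      if m = m' then Sum.inr (Sum.inl m)
      else Sum.inl ((b' - b) / (m - m'), m * ((b' - b) / (m - m')) + b)
  | Sum.inl (m, b), Sum.inr (Sum.inl b') => Sum.inl (b', m * b' + b)
  | Sum.inl (m, _), Sum.inr (Sum.inr _) => Sum.inr (Sum.inl m)
  | Sum.inr (Sum.inl b), Sum.inl (m', b') => Sum.inl (b, m' * b + b')
  | Sum.inr (Sum.inl _), Sum.inr _ => Sum.inr (Sum.inr ())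
  | Sum.inr (Sum.inr _), Sum.inl (m', _) => Sum.inr (Sum.inl m')
  | Sum.inr (Sum.inr _), Sum.inr _ => Sum.inr (Sum.inr ())

lemma meetPt_mem_left (l l' : PGPoint K) : meetPt l l' ∈ pgLine l := by
  obtain (⟨m, b⟩ | b | u) := l <;> obtain (⟨m', b'⟩ | b' | u') := l' <;>
    simp [meetPt, mem_pgLine_inl, mem_pgLine_vert, mem_pgLine_inf]
  · split <;> simp_all [mem_pgLine_inl]

lemma meetPt_mem_right (l l' : PGPoint K) : meetPt l l' ∈ pgLine l' := by
  obtain (⟨m, b⟩ | b | u) := l <;> obtain (⟨m', b'⟩ | b' | u') := l' <;>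
    simp [meetPt, mem_pgLine_inl, mem_pgLine_vert, mem_pgLine_inf]
  · split
    · rename_i h; simp [mem_pgLine_inl, h]
    · rename_i h
      left
      refine ⟨(b' - b) / (m - m'), ?_⟩
      have hne : m - m' ≠ 0 := sub_ne_zero.2 h
      congr 2
      field_simp
      ring

lemma eq_meetPt {l l' : PGPoint K} (hne : l ≠ l') {p : PGPoint K}
    (h : p ∈ pgLine l) (h' : p ∈ pgLine l') : p = meetPt l l' := by
  obtain (⟨m, b⟩ | b | u) := l
  · obtain (⟨m', b'⟩ | b' | u') := l'
    · rw [mem_pgLine_inl] at h h'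
      rcases h with ⟨x, rfl⟩ | rfl
      · rcases h' with ⟨x', hx'⟩ | hx'
        · simp only [Sum.inl.injEq, Prod.mk.injEq] at hx'
          obtain ⟨rfl, hy⟩ := hx'
          by_cases hm : m = m'
          · subst hm
            exact absurd (by rw [add_left_cancel hy]) hne
          · have hsub : m - m' ≠ 0 := sub_ne_zero.2 hm
            have hx : x = (b' - b) / (m - m') := by
              field_simp
              linear_combination hy
            simp [meetPt, hm, hx]
        · exact absurd hx' (by simp)
      · rcases h' with ⟨x', hx'⟩ | hx'
        · exact absurd hx' (by simp)
        · simp only [Sum.inr.injEq, Sum.inl.injEq] at hx'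
          subst hx'
          simp [meetPt]
    · rw [mem_pgLine_inl] at h
      rw [mem_pgLine_vert] at h'
      rcases h with ⟨x, rfl⟩ | rfl
      · rcases h' with ⟨y, hy⟩ | hy
        · simp only [Sum.inl.injEq, Prod.mk.injEq] at hy
          obtain ⟨rfl, rfl⟩ := hy
          simp [meetPt]
        · exact absurd hy (by simp)
      · rcases h' with ⟨y, hy⟩ | hy <;> exact absurd hy (by simp)
    · rw [mem_pgLine_inl] at h
      rw [mem_pgLine_inf] at h'
      rcases h with ⟨x, rfl⟩ | rfl
      · rcases h' with ⟨y, hy⟩ | hy <;> exact absurd hy (by simp)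
      · simp [meetPt]
  · obtain (⟨m', b'⟩ | b' | u') := l'
    · rw [mem_pgLine_vert] at h
      rw [mem_pgLine_inl] at h'
      rcases h with ⟨y, rfl⟩ | rfl
      · rcases h' with ⟨x, hx⟩ | hx
        · simp only [Sum.inl.injEq, Prod.mk.injEq] at hx
          obtain ⟨rfl, rfl⟩ := hx
          simp [meetPt]
        · exact absurd hx (by simp)
      · rcases h' with ⟨x, hx⟩ | hx <;> exact absurd hx (by simp)
    · rw [mem_pgLine_vert] at h
      rw [mem_pgLine_vert] at h'
      rcases h with ⟨y, rfl⟩ | rfl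
      · rcases h' with ⟨y', hy'⟩ | hy'
        · simp only [Sum.inl.injEq, Prod.mk.injEq] at hy'
          exact absurd (by rw [hy'.1]) hne
        · exact absurd hy' (by simp)
      · simp [meetPt]
    · rw [mem_pgLine_vert] at h
      rw [mem_pgLine_inf] at h'
      rcases h with ⟨y, rfl⟩ | rfl
      · rcases h' with ⟨y', hy'⟩ | hy' <;> exact absurd hy' (by simp)
      · simp [meetPt]
  · obtain (⟨m', b'⟩ | b' | u') := l'
    · rw [mem_pgLine_inf] at h
      rw [mem_pgLine_inl] at h'
      rcases h with ⟨y, rfl⟩ | rfl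
      · rcases h' with ⟨x, hx⟩ | hx
        · exact absurd hx (by simp)
        · simp only [Sum.inr.injEq, Sum.inl.injEq] at hx
          subst hx
          simp [meetPt]
      · rcases h' with ⟨x, hx⟩ | hx <;> exact absurd hx (by simp)
    · rw [mem_pgLine_inf] at h
      rw [mem_pgLine_vert] at h'
      rcases h with ⟨y, rfl⟩ | rfl
      · rcases h' with ⟨y', hy'⟩ | hy' <;> exact absurd hy' (by simp)
      · simp [meetPt]
    · exact absurd rfl hne

lemma card_pgLine (l : PGPoint K) : (pgLine l).card = Fintype.card K + 1 := by
  obtain (⟨m, b⟩ | b | u) := l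
  · rw [pgLine, Finset.card_union_of_disjoint (by simp),
      Finset.card_image_of_injective _ (fun a a' h => by
        simpa using congrArg Prod.fst (Sum.inl.inj h)), Finset.card_univ, Finset.card_singleton]
  · rw [pgLine, Finset.card_union_of_disjoint (by simp),
      Finset.card_image_of_injective _ (fun a a' h => by
        simpa using congrArg Prod.snd (Sum.inl.inj h)), Finset.card_univ, Finset.card_singleton]
  · rw [pgLine, Finset.card_union_of_disjoint (by simp),
      Finset.card_image_of_injective _ (fun a a' h => by
        simpa using h), Finset.card_univ, Finset.card_singleton]

lemma card_PGPoint : Fintype.card (PGPoint K) =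
    Fintype.card K * Fintype.card K + Fintype.card K + 1 := by
  simp [PGPoint]
  ring

lemma two_ne_zero_of_odd_card (hodd : Odd (Fintype.card K)) : (2 : K) ≠ 0 := by
  intro h
  have hdvd : ringChar K ∣ 2 := ringChar.dvd (by exact_mod_cast h)
  have h1 : ringChar K ≠ 1 := CharP.ringChar_ne_one
  have h2 : ringChar K = 2 := by
    rcases (Nat.dvd_prime Nat.prime_two).1 hdvd with h' | h'
    · exact absurd h' h1
    · exact h'
  have := FiniteField.even_card_of_char_two h2
  rw [Nat.odd_iff] at hodd
  omega

variable {S : Finset (PGPoint K)}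

lemma fiber_card_le_one (hS : ∀ p : PGPoint K, (S.filter fun l => p ∈ pgLine l).card ≤ 2)
    {ℓ : PGPoint K} (hl : ℓ ∈ S) {p : PGPoint K} (hp : p ∈ pgLine ℓ) :
    ((S.erase ℓ).filter fun l => meetPt l ℓ = p).card ≤ 1 := by
  have hsub : ((S.erase ℓ).filter fun l => meetPt l ℓ = p) ⊆
      (S.filter fun l => p ∈ pgLine l).erase ℓ := by
    intro x hx
    simp only [Finset.mem_filter, Finset.mem_erase] at hx ⊢
    exact ⟨hx.1.1, hx.1.2, hx.2 ▸ meetPt_mem_left x ℓ⟩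
  calc ((S.erase ℓ).filter fun l => meetPt l ℓ = p).card
      ≤ ((S.filter fun l => p ∈ pgLine l).erase ℓ).card := Finset.card_le_card hsub
    _ = (S.filter fun l => p ∈ pgLine l).card - 1 :=
        Finset.card_erase_of_mem (by simp [hl, hp])
    _ ≤ 1 := by have := hS p; omega

lemma card_erase_eq_sum (ℓ : PGPoint K) :
    (S.erase ℓ).card = ∑ p ∈ pgLine ℓ, ((S.erase ℓ).filter fun l => meetPt l ℓ = p).card :=
  Finset.card_eq_sum_card_fiberwise fun l _ => meetPt_mem_right l ℓ

lemma card_le_add_two (hS : ∀ p : PGPoint K, (S.filter fun l => p ∈ pgLine l).card ≤ 2) :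
    S.card ≤ Fintype.card K + 2 := by
  rcases S.eq_empty_or_nonempty with rfl | ⟨ℓ, hl⟩
  · simp
  · have h1 : (S.erase ℓ).card ≤ Fintype.card K + 1 := by
      rw [card_erase_eq_sum ℓ]
      calc ∑ p ∈ pgLine ℓ, ((S.erase ℓ).filter fun l => meetPt l ℓ = p).card
          ≤ ∑ _p ∈ pgLine ℓ, 1 :=
            Finset.sum_le_sum fun p hp => fiber_card_le_one hS hl hp
        _ = (pgLine ℓ).card := (Finset.card_eq_sum_ones _).symm
        _ = Fintype.card K + 1 := card_pgLine ℓ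
    have h2 := Finset.card_erase_of_mem hl
    have h3 : 1 ≤ S.card := Finset.card_pos.2 ⟨ℓ, hl⟩
    omega

lemma card_ne_add_two (hodd : Odd (Fintype.card K))
    (hS : ∀ p : PGPoint K, (S.filter fun l => p ∈ pgLine l).card ≤ 2) :
    S.card ≠ Fintype.card K + 2 := by
  intro hc
  have key : ∀ l ∈ S, ∀ p ∈ pgLine l, (S.filter fun l' => p ∈ pgLine l').card = 2 := by
    intro l hl p hp
    have hsum : ∑ p ∈ pgLine l, ((S.erase l).filter fun l' => meetPt l' l = p).card
        = ∑ p ∈ pgLine l, 1 := by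
      rw [← card_erase_eq_sum l, Finset.card_erase_of_mem hl, hc,
        ← Finset.card_eq_sum_ones, card_pgLine]
      omega
    have hall := (Finset.sum_eq_sum_iff_of_le
      (fun p hp => fiber_card_le_one hS hl hp)).1 hsum p hp
    obtain ⟨l', hl'⟩ := Finset.card_eq_one.1 hall
    have hl'mem : l' ∈ (S.erase l).filter fun x => meetPt x l = p :=
      hl' ▸ Finset.mem_singleton_self l'
    simp only [Finset.mem_filter, Finset.mem_erase] at hl'mem
    have hpl' : p ∈ pgLine l' := hl'mem.2 ▸ meetPt_mem_left l' l
    have h2 : ({l, l'} : Finset (PGPoint K)) ⊆ S.filter fun x => p ∈ pgLine x := by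
      intro x hx
      simp only [Finset.mem_insert, Finset.mem_singleton] at hx
      rcases hx with rfl | rfl
      · simp [hl, hp]
      · simp [hl'mem.1.2, hpl']
    have hcard2 : ({l, l'} : Finset (PGPoint K)).card = 2 := by
      rw [Finset.card_insert_of_notMem (by simp [Ne.symm hl'mem.1.1]),
        Finset.card_singleton]
    have := Finset.card_le_card h2
    rw [hcard2] at this
    exact le_antisymm (hS p) this
  have hq2 : 2 ≤ Fintype.card K := Fintype.one_lt_card
  have hlt : S.card < Fintype.card (PGPoint K) := by
    rw [card_PGPoint, hc]; nlinarith
  obtain ⟨ℓ, hℓ⟩ : ∃ ℓ : PGPoint K, ℓ ∉ S := by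
    by_contra hcon
    push_neg at hcon
    rw [Finset.eq_univ_iff_forall.2 hcon, Finset.card_univ] at hlt
    omega
  have herase : S.erase ℓ = S := Finset.erase_eq_of_notMem hℓ
  have hsum : S.card = ∑ p ∈ pgLine ℓ, (S.filter fun l => p ∈ pgLine l).card := by
    conv_lhs => rw [← herase]
    rw [card_erase_eq_sum ℓ]
    refine Finset.sum_congr rfl fun p hp => ?_
    rw [herase]
    congr 1
    refine Finset.filter_congr fun l hl => ?_
    constructor
    · intro h; exact h ▸ meetPt_mem_left l ℓ
    · intro h
      have hne : l ≠ ℓ := by rintro rfl; exact hℓ hl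
      exact (eq_meetPt hne h hp).symm
  have heven : Even S.card := by
    rw [hsum]
    refine Finset.even_sum _ fun p hp => ?_
    rcases Finset.eq_empty_or_nonempty (S.filter fun l => p ∈ pgLine l) with he | ⟨l, hl⟩
    · simp [he]
    · simp only [Finset.mem_filter] at hl
      rw [key l hl.1 p hl.2]
      exact even_two
  rw [hc, Nat.even_iff] at heven
  rw [Nat.odd_iff] at hodd
  omega

lemma pg_construction (h2 : (2:K) ≠ 0) :
    ∃ S : Finset (PGPoint K), S.card = Fintype.card K + 1 ∧
      ∀ p : PGPoint K, (S.filter fun l => p ∈ pgLine l).card ≤ 2 := by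
  set S : Finset (PGPoint K) :=
    (Finset.univ.image fun t : K => (Sum.inl (2*t, -(t*t)) : PGPoint K)) ∪
      {Sum.inr (Sum.inr ())} with hSdef
  have hinj : Function.Injective fun t : K => (Sum.inl (2*t, -(t*t)) : PGPoint K) := by
    intro a a' h
    have := congrArg Prod.fst (Sum.inl.inj h)
    exact mul_left_cancel₀ h2 this
  have hmem : ∀ x : PGPoint K, x ∈ S ↔
      (∃ t : K, x = Sum.inl (2*t, -(t*t))) ∨ x = Sum.inr (Sum.inr ()) := by
    intro x
    simp [hSdef, eq_comm]
    exact or_comm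
  refine ⟨S, ?_, ?_⟩
  · rw [hSdef, Finset.card_union_of_disjoint (by simp),
      Finset.card_image_of_injective _ hinj, Finset.card_univ, Finset.card_singleton]
  · intro p
    obtain (⟨X, Y⟩ | w | u) := p
    · -- affine point
      by_contra hcon
      push_neg at hcon
      obtain ⟨a, b, c, ha, hb, hc, hab, hac, hbc⟩ := Finset.two_lt_card_iff.1 hcon
      have claim : ∀ x ∈ S.filter fun l => (Sum.inl (X, Y) : PGPoint K) ∈ pgLine l,
          ∃ t : K, x = Sum.inl (2*t, -(t*t)) ∧ Y = 2*t*X + -(t*t) := by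
        intro x hx
        obtain ⟨hxS, hxp⟩ := Finset.mem_filter.1 hx
        rcases (hmem x).1 hxS with ⟨t, rfl⟩ | rfl
        · rw [mem_pgLine_inl] at hxp
          rcases hxp with ⟨x', hx'⟩ | hx'
          · simp only [Sum.inl.injEq, Prod.mk.injEq] at hx'
            exact ⟨t, rfl, hx'.1 ▸ hx'.2⟩
          · exact absurd hx' (by simp)
        · rw [mem_pgLine_inf] at hxp
          rcases hxp with ⟨y, hy⟩ | hy <;> exact absurd hy (by simp)
      obtain ⟨t, rfl, het⟩ := claim a ha
      obtain ⟨s, rfl, hes⟩ := claim b hb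
      obtain ⟨u, rfl, heu⟩ := claim c hc
      have hts : t ≠ s := fun h => hab (by rw [h])
      have htu : t ≠ u := fun h => hac (by rw [h])
      have hsu : s ≠ u := fun h => hbc (by rw [h])
      have e1 : (t - s) * (2*X - (t + s)) = 0 := by linear_combination hes - het
      have e2 : (t - u) * (2*X - (t + u)) = 0 := by linear_combination heu - het
      have f1 : 2*X = t + s := by
        have h := (mul_eq_zero.1 e1).resolve_left (sub_ne_zero.2 hts)
        linear_combination h
      have f2 : 2*X = t + u := by
        have h := (mul_eq_zero.1 e2).resolve_left (sub_ne_zero.2 htu)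
        linear_combination h
      exact hsu (by linear_combination f2 - f1)
    · -- point at infinity with slope w
      have hsub : (S.filter fun l => (Sum.inr (Sum.inl w) : PGPoint K) ∈ pgLine l) ⊆
          {Sum.inl (2*(w/2), -((w/2)*(w/2))), Sum.inr (Sum.inr ())} := by
        intro x hx
        obtain ⟨hxS, hxp⟩ := Finset.mem_filter.1 hx
        rcases (hmem x).1 hxS with ⟨t, rfl⟩ | rfl
        · rw [mem_pgLine_inl] at hxp
          rcases hxp with ⟨x', hx'⟩ | hx'
          · exact absurd hx' (by simp)
          · simp only [Sum.inr.injEq, Sum.inl.injEq] at hx'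
            have ht : t = w / 2 := by
              rw [eq_div_iff h2]
              linear_combination -hx'
            simp [ht]
        · simp
      calc (S.filter fun l => (Sum.inr (Sum.inl w) : PGPoint K) ∈ pgLine l).card
          ≤ ({Sum.inl (2*(w/2), -((w/2)*(w/2))), Sum.inr (Sum.inr ())} :
              Finset (PGPoint K)).card := Finset.card_le_card hsub
        _ ≤ 2 := by
            refine le_trans (Finset.card_insert_le _ _) ?_
            simp
    · -- the point (ω, ω)
      have hsub : (S.filter fun l => (Sum.inr (Sum.inr u) : PGPoint K) ∈ pgLine l) ⊆
          {Sum.inr (Sum.inr ())} := by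
        intro x hx
        obtain ⟨hxS, hxp⟩ := Finset.mem_filter.1 hx
        rcases (hmem x).1 hxS with ⟨t, rfl⟩ | rfl
        · rw [mem_pgLine_inl] at hxp
          rcases hxp with ⟨x', hx'⟩ | hx' <;> exact absurd hx' (by simp)
        · simp
      calc _ ≤ ({Sum.inr (Sum.inr ())} : Finset (PGPoint K)).card :=
            Finset.card_le_card hsub
        _ ≤ 2 := by simp

end PGAux

/-- For odd prime power `q`, the maximum size of a triangular family of lines of
`PG(2,q)` (no point on three of the lines) is exactly `q + 1`. -/
theorem pg_triangular_odd {K : Type*} [Field K] [Fintype K] [DecidableEq K]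
    (q : ℕ) (hq : IsPrimePow q) (hodd : Odd q) (hcard : Fintype.card K = q) :
    (∃ S : Finset (PGPoint K), S.card = q + 1 ∧
      ∀ p : PGPoint K, (S.filter fun l => p ∈ pgLine l).card ≤ 2) ∧
    (∀ S : Finset (PGPoint K),
      (∀ p : PGPoint K, (S.filter fun l => p ∈ pgLine l).card ≤ 2) →
      S.card ≤ q + 1) := by
  subst hcard
  constructor
  · exact pg_construction (two_ne_zero_of_odd_card hodd)
  · intro S hS
    have h1 := card_le_add_two hS
    have h2 := card_ne_add_two hodd hS
    omega
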